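/- Let X be an Archimedean vector lattice admitting a positively homogeneous continuous function calculus x ↦ Φ_x. Then for all m, n ∈ ℕ, x ∈ Xⁿ, f₁,…,f_m ∈ H_n and g ∈ H_m, one has Φ_{(Φ_x(f₁),…,Φ_x(f_m))}(g) = Φ_x(g ∘ (f₁ × ⋯ × f_m)), where (f₁ × ⋯ × f_m)(t) = (f₁(t),…,f_m(t)). -/

import Mathlib

/-- `H_n`: positively homogeneous continuous functions `ℝⁿ → ℝ`. -/
def MemHn {n : ℕ} (f : (Fin n → ℝ) → ℝ) : Prop :=
  Continuous f ∧ ∀ (c : ℝ), 0 ≤ c → ∀ t, f (c • t) = c * f t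

/-- the `i`-th coordinate projection, an element of `H_n`. -/
def projFn (n : ℕ) (i : Fin n) : (Fin n → ℝ) → ℝ := fun t => t i

section VL
variable {X : Type*} [Lattice X] [AddCommGroup X] [Module ℝ X]

/-- A vector lattice homomorphism `H_n → X`, encoded as a map on all functions
that is linear and sup-preserving on members of `H_n`. -/
def IsVLHomHn {n : ℕ} (Φ : ((Fin n → ℝ) → ℝ) → X) : Prop :=
  (∀ f g, MemHn f → MemHn g → Φ (f + g) = Φ f + Φ g) ∧
  (∀ (c : ℝ) f, MemHn f → Φ (c • f) = c • Φ f) ∧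
  (∀ f g, MemHn f → MemHn g → Φ (f ⊔ g) = Φ f ⊔ Φ g)

/-- The order ideal generated by `e`. -/
def Ie (e : X) : Set X := {x | ∃ l : ℝ, 0 ≤ l ∧ |x| ≤ l • e}

/-- `‖x‖_e = inf {λ ≥ 0 : |x| ≤ λ e}`. -/
noncomputable def enorm (e x : X) : ℝ := sInf {l : ℝ | 0 ≤ l ∧ |x| ≤ l • e}

/-- A sublattice and linear subspace. -/
def IsSubl (S : Set X) : Prop :=
  (0 : X) ∈ S ∧ (∀ a ∈ S, ∀ b ∈ S, a + b ∈ S) ∧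
  (∀ (c : ℝ), ∀ a ∈ S, c • a ∈ S) ∧ (∀ a ∈ S, ∀ b ∈ S, a ⊔ b ∈ S)

/-- `S` is closed in the carrier `C` with respect to the `‖·‖_e`-distance. -/
def ClosedIn (e : X) (C S : Set X) : Prop :=
  ∀ x ∈ C, (∀ ε : ℝ, 0 < ε → ∃ y ∈ S, enorm e (x - y) < ε) → x ∈ S

/-- The closed sublattice of `C` generated by the set `A`. -/
def genClosedSubl (e : X) (C A : Set X) : Set X :=
  ⋂₀ {S : Set X | S ⊆ C ∧ A ⊆ S ∧ IsSubl S ∧ ClosedIn e C S}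

/-- The norm `‖·‖_e` is complete on `S`: every `‖·‖_e`-Cauchy sequence in `S`
converges, in `‖·‖_e`, to an element of `S`. -/
def CompleteOn (e : X) (S : Set X) : Prop :=
  ∀ u : ℕ → X, (∀ k, u k ∈ S) →
    (∀ ε : ℝ, 0 < ε → ∃ N, ∀ m ≥ N, ∀ n ≥ N, enorm e (u m - u n) < ε) →
    ∃ x ∈ S, ∀ ε : ℝ, 0 < ε → ∃ N, ∀ m ≥ N, enorm e (u m - x) < ε

end VL

/-- An Archimedean vector lattice. -/
def IsArchimedeanVL (X : Type*) [Lattice X] [AddCommGroup X] : Prop :=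
  ∀ x y : X, 0 ≤ x → 0 ≤ y → (∀ n : ℕ, n • x ≤ y) → x = 0

section Aux
variable {m : ℕ}

/-- Lattice-linear span of coordinate projections. -/
inductive LatSpan (m : ℕ) : ((Fin m → ℝ) → ℝ) → Prop
  | proj (i : Fin m) : LatSpan m (projFn m i)
  | add {p q} : LatSpan m p → LatSpan m q → LatSpan m (p + q)
  | smul (c : ℝ) {p} : LatSpan m p → LatSpan m (c • p)
  | sup {p q} : LatSpan m p → LatSpan m q → LatSpan m (p ⊔ q)

lemma latSpan_congr {p q} (h : LatSpan m p) (hq : p = q) : LatSpan m q := hq ▸ h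

lemma memHn_proj (i : Fin m) : MemHn (projFn m i) :=
  ⟨continuous_apply i, fun c _ t => by simp [projFn, Pi.smul_apply]⟩

lemma memHn_add {p q : (Fin m → ℝ) → ℝ} (hp : MemHn p) (hq : MemHn q) : MemHn (p + q) :=
  ⟨hp.1.add hq.1, fun c hc t => by
    simp only [Pi.add_apply, hp.2 c hc t, hq.2 c hc t]; ring⟩

lemma memHn_smul (c : ℝ) {p : (Fin m → ℝ) → ℝ} (hp : MemHn p) : MemHn (c • p) :=
  ⟨hp.1.const_smul c, fun a ha t => by
    simp only [Pi.smul_apply, smul_eq_mul, hp.2 a ha t]; ring⟩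

lemma memHn_sup {p q : (Fin m → ℝ) → ℝ} (hp : MemHn p) (hq : MemHn q) : MemHn (p ⊔ q) :=
  ⟨hp.1.max hq.1, fun c hc t => by
    simp only [Pi.sup_apply, hp.2 c hc t, hq.2 c hc t]
    exact (mul_max_of_nonneg _ _ hc).symm⟩

lemma memHn_zero : MemHn (0 : (Fin m → ℝ) → ℝ) :=
  ⟨continuous_const, fun c _ t => by simp⟩

lemma latSpan_memHn {p} (h : LatSpan m p) : MemHn p := by
  induction h with
  | proj i => exact memHn_proj i
  | add _ _ hp hq => exact memHn_add hp hq
  | smul c _ hp => exact memHn_smul c hp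
  | sup _ _ hp hq => exact memHn_sup hp hq

lemma latSpan_zero (hm : 0 < m) : LatSpan m 0 :=
  latSpan_congr (LatSpan.smul 0 (LatSpan.proj ⟨0, hm⟩)) (by funext t; simp)

lemma latSpan_sum (hm : 0 < m) (c : Fin m → ℝ) (s : Finset (Fin m)) :
    LatSpan m (fun t => ∑ i ∈ s, c i * t i) := by
  classical
  induction s using Finset.induction with
  | empty => exact latSpan_congr (latSpan_zero hm) (by funext t; simp)
  | @insert a s hnot ih =>
    exact latSpan_congr (LatSpan.add (LatSpan.smul (c a) (LatSpan.proj a)) ih)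
      (by funext t; simp [projFn, Finset.sum_insert hnot])

lemma latSpan_linear (hm : 0 < m) (c : Fin m → ℝ) :
    LatSpan m (fun t => ∑ i, c i * t i) := latSpan_sum hm c Finset.univ

lemma latSpan_inf {p q} (hp : LatSpan m p) (hq : LatSpan m q) : LatSpan m (p ⊓ q) :=
  latSpan_congr (LatSpan.smul (-1) (LatSpan.sup (LatSpan.smul (-1) hp) (LatSpan.smul (-1) hq)))
    (by funext t;
        simp [Pi.sup_apply, Pi.inf_apply, max_neg_neg, mul_comm])

lemma latSpan_e (hm : 0 < m) : LatSpan m (fun t => ∑ i, |t i|) := by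
  classical
  have : ∀ s : Finset (Fin m), LatSpan m (fun t => ∑ i ∈ s, |t i|) := by
    intro s
    induction s using Finset.induction with
    | empty => exact latSpan_congr (latSpan_zero hm) (by funext t; simp)
    | @insert a s hnot ih =>
      refine latSpan_congr
        (LatSpan.add (LatSpan.sup (LatSpan.proj a) (LatSpan.smul (-1) (LatSpan.proj a))) ih) ?_
      funext t
      simp [projFn, Pi.sup_apply, Finset.sum_insert hnot, max_neg_neg,
        abs_eq_max_neg]
  exact this Finset.univ

end Aux

section Dens
variable {m : ℕ}

/-- plain dot product on `Fin m → ℝ`. -/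
def ip (u v : Fin m → ℝ) : ℝ := ∑ i, u i * v i

lemma ip_comm (u v : Fin m → ℝ) : ip u v = ip v u := by
  unfold ip; exact Finset.sum_congr rfl fun i _ => mul_comm _ _

lemma ip_self_nonneg (u : Fin m → ℝ) : 0 ≤ ip u u :=
  Finset.sum_nonneg fun i _ => mul_self_nonneg _

lemma ip_self_pos {u : Fin m → ℝ} (hu : u ≠ 0) : 0 < ip u u := by
  rcases (ip_self_nonneg u).lt_or_eq with h | h
  · exact h
  · exfalso; apply hu
    have := (Finset.sum_eq_zero_iff_of_nonneg (fun i _ => mul_self_nonneg (u i))).mp h.symm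
    funext i
    have := this i (Finset.mem_univ i)
    exact mul_self_eq_zero.mp this

lemma ip_lin (t : Fin m → ℝ) (a b : ℝ) (u v : Fin m → ℝ) :
    ip (a • u + b • v) t = a * ip u t + b * ip v t := by
  unfold ip
  rw [Finset.mul_sum, Finset.mul_sum, ← Finset.sum_add_distrib]
  exact Finset.sum_congr rfl fun i _ => by simp [Pi.add_apply, Pi.smul_apply]; ring

/-- Strong point separation for the lattice span on nonzero, non-(positively/negatively unequal)
points: for `x ≠ 0`, `y ≠ 0`, there is `p ∈ LatSpan` with prescribed values, provided
either `x = y`, `x = -y`, or `x, y` are not proportional. -/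
lemma latSpan_sep (hm : 0 < m) (x y : Fin m → ℝ) (hx : ‖x‖ = 1) (hy : ‖y‖ = 1)
    (a b : ℝ) (hab : x = y → a = b) :
    ∃ p, LatSpan m p ∧ p x = a ∧ p y = b := by
  have hx0 : x ≠ 0 := fun h => by simp [h] at hx
  have hy0 : y ≠ 0 := fun h => by simp [h] at hy
  by_cases hxy : x = y
  · -- single point
    obtain ⟨i, hi⟩ : ∃ i, x i ≠ 0 := by
      by_contra h
      push_neg at h
      exact hx0 (funext h)
    refine ⟨(a / x i) • projFn m i, LatSpan.smul _ (LatSpan.proj i), ?_, ?_⟩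
    · simp [projFn, div_mul_cancel₀ _ hi]
    · rw [← hxy, hab hxy]
      simp [projFn, div_mul_cancel₀ _ hi]
  by_cases hprop : ∃ r : ℝ, x = r • y
  · -- antipodal case : x = -y
    obtain ⟨r, hr⟩ := hprop
    have hr1 : |r| = 1 := by
      have : ‖x‖ = |r| * ‖y‖ := by rw [hr, norm_smul, Real.norm_eq_abs]
      rw [hx, hy, mul_one] at this; exact this.symm
    have hrneg : r = -1 := by
      rcases abs_eq (by norm_num : (0:ℝ) ≤ 1) |>.mp hr1 with h | h
      · exact absurd (by rw [hr, h, one_smul]) hxy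
      · exact h
    have hxny : x = -y := by rw [hr, hrneg]; funext i; simp
    -- φ linear with φ y = 1, φ x = -1
    set c : Fin m → ℝ := (ip y y)⁻¹ • y with hc
    have hyy := ip_self_pos hy0
    have hφy : ip c y = 1 := by
      rw [hc]
      have : ip ((ip y y)⁻¹ • y + (0:ℝ) • y) y = (ip y y)⁻¹ * ip y y + 0 * ip y y := ip_lin ..
      simp only [zero_smul, add_zero, zero_mul] at this
      rw [this, inv_mul_cancel₀ (ne_of_gt hyy)]
    have hφx : ip c x = -1 := by
      rw [hxny]
      have : ip c (-y) = -ip c y := by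
        unfold ip; rw [← Finset.sum_neg_distrib]
        exact Finset.sum_congr rfl fun i _ => by simp
      rw [this, hφy]
    set φ : (Fin m → ℝ) → ℝ := fun t => ∑ i, c i * t i with hφ
    have hφspan : LatSpan m φ := latSpan_linear hm c
    have hφx' : φ x = -1 := hφx
    have hφy' : φ y = 1 := hφy
    refine ⟨b • (φ ⊔ 0) + a • ((-1) • φ ⊔ 0),
      LatSpan.add (LatSpan.smul b (LatSpan.sup hφspan (latSpan_zero hm)))
        (LatSpan.smul a (LatSpan.sup (LatSpan.smul (-1) hφspan) (latSpan_zero hm))), ?_, ?_⟩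
    · simp [Pi.sup_apply, hφx']
    · simp [Pi.sup_apply, hφy']
  · -- independent case : Gram matrix
    push_neg at hprop
    set Sxx := ip x x with hSxx
    set Sxy := ip x y with hSxy
    set Syy := ip y y with hSyy
    have hyy : 0 < Syy := ip_self_pos hy0
    set z : Fin m → ℝ := Syy • x + (-Sxy) • y with hz
    have hz0 : z ≠ 0 := by
      intro h
      apply hprop (Sxy / Syy)
      have : Syy • x = Sxy • y := by
        have := congrArg (fun w => w + Sxy • y) h
        simpa [hz, add_assoc, add_comm, add_left_comm] using this
      funext i
      have := congrFun this i
      simp only [Pi.smul_apply, smul_eq_mul] at this ⊢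
      field_simp
      linarith [this]
    have hzz : ip z z = Syy * (Sxx * Syy - Sxy ^ 2) := by
      have h1 : ip z z = Syy * ip x z + (-Sxy) * ip y z := ip_lin z Syy (-Sxy) x y
      have h2 : ip z x = Syy * ip x x + (-Sxy) * ip y x := ip_lin x Syy (-Sxy) x y
      have h3 : ip z y = Syy * ip x y + (-Sxy) * ip y y := ip_lin y Syy (-Sxy) x y
      rw [ip_comm x z, ip_comm y z, h2, h3] at h1
      rw [h1, ip_comm y x]
      ring
    have hD : 0 < Sxx * Syy - Sxy ^ 2 := by
      have h := ip_self_pos hz0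
      rw [hzz] at h
      nlinarith
    set D := Sxx * Syy - Sxy ^ 2 with hDdef
    set c : Fin m → ℝ := ((a * Syy - b * Sxy) / D) • x + ((b * Sxx - a * Sxy) / D) • y with hc
    refine ⟨fun t => ∑ i, c i * t i, latSpan_linear hm c, ?_, ?_⟩
    · show ip c x = a
      rw [hc, ip_lin, ip_comm y x, ← hSxx, ← hSxy]
      field_simp
      ring
    · show ip c y = b
      rw [hc, ip_lin, ← hSxy, ← hSyy]
      field_simp
      ring

lemma norm_le_sum_abs (t : Fin m → ℝ) : ‖t‖ ≤ ∑ i, |t i| := by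
  have h0 : 0 ≤ ∑ i, |t i| := Finset.sum_nonneg fun i _ => abs_nonneg _
  rw [pi_norm_le_iff_of_nonneg h0]
  intro i
  rw [Real.norm_eq_abs]
  exact Finset.single_le_sum (fun j _ => abs_nonneg (t j)) (Finset.mem_univ i)

lemma memHn_zero_at_zero {g : (Fin m → ℝ) → ℝ} (hg : MemHn g) : g 0 = 0 := by
  have := hg.2 0 le_rfl 0
  rw [smul_zero] at this
  simpa using this

lemma latSpan_dense (hm : 0 < m) (g : (Fin m → ℝ) → ℝ) (hg : MemHn g) (ε : ℝ) (hε : 0 < ε) :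
    ∃ p, LatSpan m p ∧ ∀ t, |g t - p t| ≤ ε * ∑ i, |t i| := by
  classical
  set K := Metric.sphere (0 : Fin m → ℝ) 1 with hK
  haveI : CompactSpace K := Metric.sphere.compactSpace 0 1
  have hnormK : ∀ t : K, ‖(t : Fin m → ℝ)‖ = 1 := fun t =>
    mem_sphere_zero_iff_norm.mp t.2
  -- the restriction map
  have hres : ∀ p, LatSpan m p → Continuous (fun t : K => p (t : Fin m → ℝ)) :=
    fun p hp => (latSpan_memHn hp).1.comp continuous_subtype_val
  set L : Set C(K, ℝ) :=
    {F | ∃ p, LatSpan m p ∧ ∀ t : K, F t = p (t : Fin m → ℝ)} with hL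
  have hclosure : closure L = ⊤ := by
    apply ContinuousMap.sublattice_closure_eq_top
    · exact ⟨⟨_, hres _ (LatSpan.proj ⟨0, hm⟩)⟩, ⟨_, LatSpan.proj ⟨0, hm⟩, fun t => rfl⟩⟩
    · rintro F ⟨p, hp, hF⟩ G ⟨q, hq, hG⟩
      exact ⟨p ⊓ q, latSpan_inf hp hq, fun t => by
        simp [ContinuousMap.inf_apply, hF t, hG t, Pi.inf_apply]⟩
    · rintro F ⟨p, hp, hF⟩ G ⟨q, hq, hG⟩
      exact ⟨p ⊔ q, LatSpan.sup hp hq, fun t => by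
        simp [ContinuousMap.sup_apply, hF t, hG t, Pi.sup_apply]⟩
    · intro v x y
      obtain ⟨p, hp, hpx, hpy⟩ := latSpan_sep hm (x : Fin m → ℝ) (y : Fin m → ℝ)
        (hnormK x) (hnormK y) (v x) (v y)
        (fun h => by rw [Subtype.ext h])
      exact ⟨⟨_, hres p hp⟩, ⟨p, hp, fun t => rfl⟩, hpx, hpy⟩
  -- approximate the restriction of g
  set G : C(K, ℝ) := ⟨fun t : K => g (t : Fin m → ℝ), hg.1.comp continuous_subtype_val⟩ with hG
  have hGmem : G ∈ closure L := by rw [hclosure]; trivial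
  obtain ⟨F, hFL, hdist⟩ := Metric.mem_closure_iff.mp hGmem ε hε
  obtain ⟨p, hp, hFres⟩ := hFL
  have hptw : ∀ t : K, |g (t : Fin m → ℝ) - p (t : Fin m → ℝ)| < ε := by
    intro t
    have := (ContinuousMap.dist_lt_iff hε).mp hdist t
    rw [hG] at this
    simp only [ContinuousMap.coe_mk, hFres t] at this
    rwa [Real.dist_eq] at this
  refine ⟨p, hp, fun t => ?_⟩
  by_cases ht : t = 0
  · subst ht
    rw [memHn_zero_at_zero hg, memHn_zero_at_zero (latSpan_memHn hp)]
    simp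
  · have hr : (0:ℝ) < ‖t‖ := norm_pos_iff.mpr ht
    set u : Fin m → ℝ := ‖t‖⁻¹ • t with hu
    have hun : ‖u‖ = 1 := by
      rw [hu, norm_smul, Real.norm_eq_abs, abs_inv, abs_of_pos hr, inv_mul_cancel₀ hr.ne']
    have htu : t = ‖t‖ • u := by
      rw [hu, smul_smul, mul_inv_cancel₀ hr.ne', one_smul]
    have hgu : g t = ‖t‖ * g u := by conv_lhs => rw [htu]; rw [hg.2 _ hr.le u]
    have hpu : p t = ‖t‖ * p u := by
      conv_lhs => rw [htu]; rw [(latSpan_memHn hp).2 _ hr.le u]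
    have huK : u ∈ K := mem_sphere_zero_iff_norm.mpr hun
    have := hptw ⟨u, huK⟩
    calc |g t - p t| = ‖t‖ * |g u - p u| := by
          rw [hgu, hpu, ← mul_sub, abs_mul, abs_of_pos hr]
      _ ≤ ‖t‖ * ε := mul_le_mul_of_nonneg_left this.le hr.le
      _ ≤ (∑ i, |t i|) * ε := mul_le_mul_of_nonneg_right (norm_le_sum_abs t) hε.le
      _ = ε * ∑ i, |t i| := mul_comm _ _

end Dens

section Uniq
variable {X : Type*} [Lattice X] [AddCommGroup X] [Module ℝ X]
  [CovariantClass X X (· + ·) (· ≤ ·)] {n : ℕ}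

lemma hom_zero {Φ : ((Fin n → ℝ) → ℝ) → X} (h : IsVLHomHn Φ) : Φ 0 = 0 := by
  have := h.2.1 0 0 memHn_zero
  rwa [smul_zero, zero_smul] at this

lemma hom_mono {Φ : ((Fin n → ℝ) → ℝ) → X} (h : IsVLHomHn Φ)
    {f g : (Fin n → ℝ) → ℝ} (hf : MemHn f) (hg : MemHn g) (hle : ∀ t, f t ≤ g t) :
    Φ f ≤ Φ g := by
  have hsup : f ⊔ g = g := sup_eq_right.mpr (fun t => hle t)
  calc Φ f ≤ Φ f ⊔ Φ g := le_sup_left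
    _ = Φ (f ⊔ g) := (h.2.2 f g hf hg).symm
    _ = Φ g := by rw [hsup]

lemma hom_sub_le {Φ : ((Fin n → ℝ) → ℝ) → X} (h : IsVLHomHn Φ)
    {f g q : (Fin n → ℝ) → ℝ} (hf : MemHn f) (hg : MemHn g) (hq : MemHn q)
    (hle : ∀ t, f t - g t ≤ q t) : Φ f - Φ g ≤ Φ q := by
  have hg' : MemHn ((-1 : ℝ) • g) := memHn_smul _ hg
  have hfg : MemHn (f + (-1 : ℝ) • g) := memHn_add hf hg'
  have h1 : Φ (f + (-1 : ℝ) • g) = Φ f - Φ g := by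
    rw [h.1 _ _ hf hg', h.2.1 _ _ hg, neg_one_smul, sub_eq_add_neg]
  have h2 : Φ (f + (-1 : ℝ) • g) ≤ Φ q := by
    apply hom_mono h hfg hq
    intro t
    simpa [sub_eq_add_neg] using hle t
  rwa [h1] at h2

lemma hom_eq_on_span {Φ₁ Φ₂ : ((Fin n → ℝ) → ℝ) → X} (h₁ : IsVLHomHn Φ₁)
    (h₂ : IsVLHomHn Φ₂) (hp : ∀ i, Φ₁ (projFn n i) = Φ₂ (projFn n i))
    {p} (hsp : LatSpan n p) : Φ₁ p = Φ₂ p := by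
  induction hsp with
  | proj i => exact hp i
  | add hu hv ihu ihv =>
    rw [h₁.1 _ _ (latSpan_memHn hu) (latSpan_memHn hv),
      h₂.1 _ _ (latSpan_memHn hu) (latSpan_memHn hv), ihu, ihv]
  | smul c hu ihu =>
    rw [h₁.2.1 _ _ (latSpan_memHn hu), h₂.2.1 _ _ (latSpan_memHn hu), ihu]
  | sup hu hv ihu ihv =>
    rw [h₁.2.2 _ _ (latSpan_memHn hu) (latSpan_memHn hv),
      h₂.2.2 _ _ (latSpan_memHn hu) (latSpan_memHn hv), ihu, ihv]

lemma hom_le_of_eq_proj (hArch : IsArchimedeanVL X) {m : ℕ} (hm : 0 < m)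
    {Φ₁ Φ₂ : ((Fin m → ℝ) → ℝ) → X} (h₁ : IsVLHomHn Φ₁) (h₂ : IsVLHomHn Φ₂)
    (hp : ∀ i, Φ₁ (projFn m i) = Φ₂ (projFn m i))
    (g : (Fin m → ℝ) → ℝ) (hg : MemHn g) : Φ₁ g ≤ Φ₂ g := by
  haveI : CovariantClass X X (Function.swap (· + ·)) (· ≤ ·) :=
    ⟨fun a b c h => by simpa [add_comm] using add_le_add_left h a⟩
  set e : (Fin m → ℝ) → ℝ := fun t => ∑ i, |t i| with he
  have hespan : LatSpan m e := latSpan_e hm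
  have heH : MemHn e := latSpan_memHn hespan
  have henn : ∀ t, 0 ≤ e t := fun t => Finset.sum_nonneg fun i _ => abs_nonneg _
  set E := Φ₁ e with hE
  set d := Φ₁ g - Φ₂ g with hd
  have hEnn : 0 ≤ E := by
    rw [hE, ← hom_zero h₁]
    exact hom_mono h₁ memHn_zero heH henn
  have key : ∀ k : ℕ, k • (d ⊔ 0) ≤ E := by
    intro k
    rcases Nat.eq_zero_or_pos k with hk | hk
    · simpa [hk] using hEnn
    · have hkR : (0:ℝ) < (k:ℝ) := Nat.cast_pos.mpr hk
      set ε : ℝ := 1 / (2 * k) with hε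
      have hεpos : 0 < ε := by positivity
      obtain ⟨p, hpspan, hpapprox⟩ := latSpan_dense hm g hg ε hεpos
      have hpH : MemHn p := latSpan_memHn hpspan
      have hεeH : MemHn (ε • e) := memHn_smul _ heH
      -- Φ₁ g - Φ₁ p ≤ Φ₁ (ε • e)
      have hA : Φ₁ g - Φ₁ p ≤ Φ₁ (ε • e) :=
        hom_sub_le h₁ hg hpH hεeH fun t =>
          le_trans (le_abs_self _) (by simpa using hpapprox t)
      -- Φ₂ p - Φ₂ g ≤ Φ₂ (ε • e)
      have hB : Φ₂ p - Φ₂ g ≤ Φ₂ (ε • e) :=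
        hom_sub_le h₂ hpH hg hεeH fun t => by
          have := hpapprox t
          have h2 := neg_le_of_abs_le this
          simpa using (by linarith : p t - g t ≤ ε * e t)
      have hpe : Φ₁ p = Φ₂ p := hom_eq_on_span h₁ h₂ hp hpspan
      have hee : Φ₁ (ε • e) = Φ₂ (ε • e) :=
        hom_eq_on_span h₁ h₂ hp (LatSpan.smul ε hespan)
      have hdle : d ≤ Φ₁ (ε • e) + Φ₁ (ε • e) := by
        have hB' : Φ₂ p - Φ₂ g ≤ Φ₁ (ε • e) := by rw [hee]; exact hB
        have heq : d = (Φ₁ g - Φ₁ p) + (Φ₂ p - Φ₂ g) := by rw [hpe, hd]; abel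
        rw [heq]
        exact add_le_add hA hB'
      have hsum : Φ₁ (ε • e) + Φ₁ (ε • e) = ((1:ℝ)/k) • E := by
        rw [← h₁.1 _ _ hεeH hεeH]
        have : ε • e + ε • e = ((1:ℝ)/k) • e := by
          funext t
          simp only [Pi.add_apply, Pi.smul_apply, smul_eq_mul, hε]
          field_simp
          ring
        rw [this, h₁.2.1 _ _ heH, hE]
      have hEk : (0:X) ≤ ((1:ℝ)/k) • E := by
        rw [← h₁.2.1 _ _ heH, ← hom_zero h₁]
        exact hom_mono h₁ memHn_zero (memHn_smul _ heH) fun t => by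
          have := henn t
          simp only [Pi.smul_apply, smul_eq_mul]
          positivity
      have hsup : d ⊔ 0 ≤ ((1:ℝ)/k) • E := sup_le (hsum ▸ hdle) hEk
      calc k • (d ⊔ 0) ≤ k • (((1:ℝ)/k) • E) := nsmul_le_nsmul_right hsup k
        _ = E := by
          rw [← Nat.cast_smul_eq_nsmul ℝ, smul_smul, mul_one_div,
            div_self hkR.ne', one_smul]
  have := hArch (d ⊔ 0) E le_sup_right hEnn key
  have hd0 : d ≤ 0 := le_sup_left.trans_eq this
  rwa [hd, sub_nonpos] at hd0

lemma hom_unique (hArch : IsArchimedeanVL X) {m : ℕ} (hm : 0 < m)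
    {Φ₁ Φ₂ : ((Fin m → ℝ) → ℝ) → X} (h₁ : IsVLHomHn Φ₁) (h₂ : IsVLHomHn Φ₂)
    (hp : ∀ i, Φ₁ (projFn m i) = Φ₂ (projFn m i))
    (g : (Fin m → ℝ) → ℝ) (hg : MemHn g) : Φ₁ g = Φ₂ g :=
  le_antisymm (hom_le_of_eq_proj hArch hm h₁ h₂ hp g hg)
    (hom_le_of_eq_proj hArch hm h₂ h₁ (fun i => (hp i).symm) g hg)

end Uniq

/-- a positively homogeneous continuous function calculus on an
Archimedean vector lattice satisfies the composition rule
`Φ_{(Φ_x f₁, …, Φ_x f_m)}(g) = Φ_x (g ∘ (f₁ × ⋯ × f_m))`. -/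
theorem stmt9 {X : Type*} [Lattice X] [AddCommGroup X] [Module ℝ X]
    [CovariantClass X X (· + ·) (· ≤ ·)]
    (hArch : IsArchimedeanVL X)
    (Φ : ∀ n : ℕ, (Fin n → X) → ((Fin n → ℝ) → ℝ) → X)
    (hhom : ∀ (n : ℕ) (x : Fin n → X), IsVLHomHn (Φ n x))
    (hproj : ∀ (n : ℕ) (x : Fin n → X) (i : Fin n), Φ n x (projFn n i) = x i) :
    ∀ (m n : ℕ) (x : Fin n → X) (f : Fin m → ((Fin n → ℝ) → ℝ))
      (g : (Fin m → ℝ) → ℝ), (∀ i, MemHn (f i)) → MemHn g →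
      Φ m (fun i => Φ n x (f i)) g = Φ n x (fun t => g (fun i => f i t)) := by
  intro m n x f g hf hg
  have hcomp : ∀ (h : (Fin m → ℝ) → ℝ), MemHn h → MemHn (fun t => h (fun i => f i t)) := by
    intro h hh
    constructor
    · exact hh.1.comp (continuous_pi fun i => (hf i).1)
    · intro c hc t
      have heq : (fun i => f i (c • t)) = c • (fun i => f i t) := by
        funext i; rw [(hf i).2 c hc t]; rfl
      show h (fun i => f i (c • t)) = c * h (fun i => f i t)
      rw [heq, hh.2 c hc]
  rcases Nat.eq_zero_or_pos m with hm | hm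
  · subst hm
    have hg0 : ∀ t, g t = 0 := by
      intro t
      have h0 : (0:ℝ) • t = t := by funext i; exact absurd i.2 (Nat.not_lt_zero _)
      have hh := hg.2 0 le_rfl t
      rw [h0] at hh
      simpa using hh
    have h1 : g = (0:ℝ) • g := by
      funext t; simp [hg0 t]
    have hlhs : Φ 0 (fun i => Φ n x (f i)) g = 0 := by
      conv_lhs => rw [h1]
      rw [(hhom 0 _).2.1 0 g hg, zero_smul]
    have hGH : MemHn (fun t => g (fun i => f i t)) := hcomp g hg
    have h2 : (fun t => g (fun i => f i t)) = (0:ℝ) • (fun t => g (fun i => f i t)) := by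
      funext t; simp [hg0]
    have hrhs : Φ n x (fun t => g (fun i => f i t)) = 0 := by
      conv_lhs => rw [h2]
      rw [(hhom n x).2.1 0 _ hGH, zero_smul]
    rw [hlhs, hrhs]
  · set Φ₂ : ((Fin m → ℝ) → ℝ) → X := fun h => Φ n x (fun t => h (fun i => f i t)) with hΦ₂
    have h₂ : IsVLHomHn Φ₂ := by
      refine ⟨?_, ?_, ?_⟩
      · intro u v hu hv
        show Φ n x _ = Φ n x _ + Φ n x _
        have heq : (fun t => (u + v) (fun i => f i t)) =
            (fun t => u (fun i => f i t)) + (fun t => v (fun i => f i t)) := rfl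
        rw [heq]
        exact (hhom n x).1 _ _ (hcomp u hu) (hcomp v hv)
      · intro c u hu
        show Φ n x _ = c • Φ n x _
        have heq : (fun t => (c • u) (fun i => f i t)) =
            c • (fun t => u (fun i => f i t)) := rfl
        rw [heq]
        exact (hhom n x).2.1 c _ (hcomp u hu)
      · intro u v hu hv
        show Φ n x _ = Φ n x _ ⊔ Φ n x _
        have heq : (fun t => (u ⊔ v) (fun i => f i t)) =
            (fun t => u (fun i => f i t)) ⊔ (fun t => v (fun i => f i t)) := rfl
        rw [heq]
        exact (hhom n x).2.2 _ _ (hcomp u hu) (hcomp v hv)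
    have hpr : ∀ i, Φ m (fun j => Φ n x (f j)) (projFn m i) = Φ₂ (projFn m i) := by
      intro i
      rw [hproj m _ i]
      show Φ n x (f i) = Φ n x (fun t => f i t)
      rfl
    exact hom_unique hArch hm (hhom m _) h₂ hpr g hg
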